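/- arXiv:1111.3517 — 11 statements merged into one kernel-verified Lean document; each statement's English description precedes it below -/
import Mathlib

section
/- For any graphs G and H, γ_R(G □ H) ≥ (2/3)·γ(G)·γ_R(H), where G □ H is the Cartesian product. -/
open Finset

/-- A set `S` is a dominating set of `G` if every vertex outside `S` has a neighbor in `S`. -/
def IsDominatingSet {V : Type*} (G : SimpleGraph V) (S : Set V) : Prop :=
  ∀ v, v ∉ S → ∃ u ∈ S, G.Adj u v

/-- The domination number `γ(G)`. -/
noncomputable def domNum {V : Type*} [Fintype V] (G : SimpleGraph V) : ℕ :=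
  sInf {n | ∃ S : Finset V, IsDominatingSet G ↑S ∧ S.card = n}

/-- A Roman dominating function: values in {0,1,2}, every vertex of value 0 has a
neighbor of value 2. -/
def IsRDF {V : Type*} (G : SimpleGraph V) (f : V → ℕ) : Prop :=
  (∀ v, f v ≤ 2) ∧ ∀ v, f v = 0 → ∃ u, G.Adj u v ∧ f u = 2

/-- The Roman domination number `γ_R(G)`. -/
noncomputable def romanDomNum {V : Type*} [Fintype V] (G : SimpleGraph V) : ℕ :=
  sInf {n | ∃ f : V → ℕ, IsRDF G f ∧ ∑ v, f v = n}

/-- The strong product of graphs. -/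
def strongProd {V W : Type*} (G : SimpleGraph V) (H : SimpleGraph W) :
    SimpleGraph (V × W) where
  Adj x y := x ≠ y ∧ (x.1 = y.1 ∨ G.Adj x.1 y.1) ∧ (x.2 = y.2 ∨ H.Adj x.2 y.2)
  symm := ⟨fun x y => by
    rintro ⟨h, h1, h2⟩
    refine ⟨h.symm, ?_, ?_⟩
    · cases h1 with
      | inl h => exact Or.inl h.symm
      | inr h => exact Or.inr h.symm
    · cases h2 with
      | inl h => exact Or.inl h.symm
      | inr h => exact Or.inr h.symm⟩
  loopless := ⟨fun x => by simp⟩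

/-- `G` has an efficient dominating set: a dominating set whose elements have
pairwise disjoint closed neighborhoods. -/
def HasEfficientDomSet {V : Type*} (G : SimpleGraph V) : Prop :=
  ∃ S : Finset V, IsDominatingSet G ↑S ∧
    ∀ u ∈ S, ∀ v ∈ S, u ≠ v →
      Disjoint (insert u (G.neighborSet u)) (insert v (G.neighborSet v))

lemma key_ineq {V W : Type*} [Fintype V] [Fintype W]
    (G : SimpleGraph V) (H : SimpleGraph W) :
    2 * (domNum G * romanDomNum H) ≤ 3 * romanDomNum (G.boxProd H) := by
  classical
  -- a minimum dominating set of G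
  obtain ⟨S, hSdom, hScard⟩ :
      ∃ S : Finset V, IsDominatingSet G ↑S ∧ S.card = domNum G := by
    have hne : {n | ∃ S : Finset V, IsDominatingSet G ↑S ∧ S.card = n}.Nonempty :=
      ⟨Finset.univ.card, Finset.univ,
        fun v hv => absurd (by simp : v ∈ (↑(Finset.univ : Finset V) : Set V)) hv, rfl⟩
    obtain ⟨S, hS, hc⟩ := Nat.sInf_mem hne
    exact ⟨S, hS, hc⟩
  -- a minimum Roman dominating function of G □ H
  obtain ⟨f, hf, hfsum⟩ :
      ∃ f : V × W → ℕ, IsRDF (G.boxProd H) f ∧ ∑ p, f p = romanDomNum (G.boxProd H) := by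
    have hne : {n | ∃ f : V × W → ℕ, IsRDF (G.boxProd H) f ∧ ∑ p, f p = n}.Nonempty :=
      ⟨∑ _p : V × W, 2, fun _ => 2,
        ⟨fun _ => le_refl 2, fun v hv => by simp at hv⟩, rfl⟩
    obtain ⟨f, hf, hsum⟩ := Nat.sInf_mem hne
    exact ⟨f, hf, hsum⟩
  set w := ∑ p : V × W, f p with hw
  -- assignment of each vertex of G to a dominator in S
  have hcex : ∀ v : V, ∃ u : V, u ∈ S ∧ (u = v ∨ G.Adj u v) ∧ (v ∈ S → u = v) := by
    intro v
    by_cases hv : v ∈ S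
    · exact ⟨v, hv, Or.inl rfl, fun _ => rfl⟩
    · obtain ⟨u, hu, hadj⟩ := hSdom v (by simpa using hv)
      exact ⟨u, hu, Or.inr hadj, fun h => absurd h hv⟩
  choose c hcS hcAdj hcFix using hcex
  -- cell sums
  set s : V → W → ℕ := fun i h => ∑ v ∈ Finset.univ.filter (fun v => c v = i), f (v, h)
    with hs
  -- "good" : some vertex of the fiber of i has a vertical 2-neighbor of column h
  set good : V → W → Prop := fun i h => ∃ v, c v = i ∧ ∃ h', H.Adj h' h ∧ f (v, h') = 2
    with hgood
  set g : V → W → ℕ := fun i h =>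
    if s i h = 0 then (if good i h then 0 else 1) else min 2 (s i h) with hg
  -- g i is an RDF of H, for every i
  have hgRDF : ∀ i, IsRDF H (g i) := by
    intro i
    constructor
    · intro h
      by_cases h0 : s i h = 0
      · by_cases h1 : good i h <;> simp [hg, h0, h1]
      · simp [hg, h0]
    · intro h hzero
      have h0 : s i h = 0 := by
        by_contra h0
        simp only [hg, if_neg h0] at hzero
        omega
      have hgd : good i h := by
        by_contra hgd
        simp [hg, h0, hgd] at hzero
      obtain ⟨v, hcv, h', hadj, hf2⟩ := hgd
      have hge : 2 ≤ s i h' := by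
        have hv : v ∈ Finset.univ.filter (fun v => c v = i) := by simp [hcv]
        calc 2 = f (v, h') := hf2.symm
        _ ≤ s i h' := Finset.single_le_sum (f := fun v => f (v, h'))
            (fun _ _ => Nat.zero_le _) hv
      refine ⟨h', hadj, ?_⟩
      have hne : s i h' ≠ 0 := by omega
      simp [hg, hne]
      exact hge
  -- first count : romanDomNum H ≤ ∑ h, g i h
  have hper : ∀ i, romanDomNum H ≤ ∑ h, g i h := fun i =>
    Nat.sInf_le ⟨g i, hgRDF i, rfl⟩
  -- pointwise bound by cell sums plus bad indicator
  have hpt : ∀ i h, g i h ≤ s i h + (if s i h = 0 ∧ ¬ good i h then 1 else 0) := by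
    intro i h
    by_cases h0 : s i h = 0
    · by_cases h1 : good i h <;> simp [hg, h0, h1]
    · simp [hg, h0]
  -- total cell sums equal w
  have hcells : ∑ i ∈ S, ∑ h, s i h = w := by
    calc ∑ i ∈ S, ∑ h, s i h
        = ∑ i ∈ S, ∑ v ∈ Finset.univ.filter (fun v => c v = i), ∑ h, f (v, h) := by
          refine Finset.sum_congr rfl fun i _ => ?_
          rw [Finset.sum_comm]
      _ = ∑ v, ∑ h, f (v, h) :=
          Finset.sum_fiberwise_of_maps_to (fun v _ => hcS v) _
      _ = w := (Fintype.sum_prod_type f).symm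
  -- column bound on the number of bad cells
  have hcol : ∀ h : W, (S.filter (fun i => s i h = 0 ∧ ¬ good i h)).card ≤
      (Finset.univ.filter (fun v => f (v, h) = 2)).card := by
    intro h
    set B := S.filter (fun i => s i h = 0 ∧ ¬ good i h) with hB
    set V2h := Finset.univ.filter (fun v : V => f (v, h) = 2) with hV2h
    have hTdom : IsDominatingSet G ↑(V2h ∪ (S \ B)) := by
      intro v hv
      have hvT : v ∉ V2h ∪ (S \ B) := fun hmem => hv (by simpa using hmem)
      by_cases hib : c v ∈ B
      · have hbad := (Finset.mem_filter.mp hib).2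
        have hfv : f (v, h) = 0 := by
          have hvfib : v ∈ Finset.univ.filter (fun u => c u = c v) := by simp
          have := Finset.sum_eq_zero_iff.mp hbad.1 v hvfib
          exact this
        obtain ⟨⟨a, b⟩, hadj, hu2⟩ := hf.2 (v, h) hfv
        rcases SimpleGraph.boxProd_adj.mp hadj with ⟨hGa, hb⟩ | ⟨hHb, ha⟩
        · simp only at hGa hb
          subst hb
          refine ⟨a, ?_, hGa⟩
          have : a ∈ V2h := by
            simp only [hV2h, Finset.mem_filter, Finset.mem_univ, true_and]
            exact hu2
          exact Finset.mem_coe.mpr (Finset.mem_union_left _ this)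
        · simp only at hHb ha
          subst ha
          exact absurd ⟨a, rfl, b, hHb, hu2⟩ hbad.2
      · have hiT : c v ∈ V2h ∪ (S \ B) :=
          Finset.mem_union_right _ (Finset.mem_sdiff.mpr ⟨hcS v, hib⟩)
        rcases hcAdj v with h1 | h2
        · exact absurd (Finset.mem_coe.mpr (h1 ▸ hiT)) hv
        · exact ⟨c v, Finset.mem_coe.mpr hiT, h2⟩
    have hd : domNum G ≤ (V2h ∪ (S \ B)).card := Nat.sInf_le ⟨_, hTdom, rfl⟩
    have h1 : (V2h ∪ (S \ B)).card ≤ V2h.card + (S \ B).card := Finset.card_union_le _ _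
    have h2 : (S \ B).card = S.card - B.card := Finset.card_sdiff_of_subset (Finset.filter_subset _ _)
    have h3 : B.card ≤ S.card := Finset.card_filter_le _ _
    omega
  -- number of 2's bound: 2 * total number of 2-columns ≤ w
  have h2w : 2 * ∑ h, (Finset.univ.filter (fun v => f (v, h) = 2)).card ≤ w := by
    have : ∀ h : W, 2 * (Finset.univ.filter (fun v => f (v, h) = 2)).card
        ≤ ∑ v, f (v, h) := by
      intro h
      calc 2 * (Finset.univ.filter (fun v => f (v, h) = 2)).card
          = ∑ v ∈ Finset.univ.filter (fun v => f (v, h) = 2), f (v, h) := by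
            rw [Finset.sum_congr rfl (fun v hv => (Finset.mem_filter.mp hv).2),
              Finset.sum_const, smul_eq_mul, mul_comm]
        _ ≤ ∑ v, f (v, h) :=
            Finset.sum_le_sum_of_subset (Finset.filter_subset _ _)
    calc 2 * ∑ h, (Finset.univ.filter (fun v => f (v, h) = 2)).card
        = ∑ h, 2 * (Finset.univ.filter (fun v => f (v, h) = 2)).card := by
          rw [Finset.mul_sum]
      _ ≤ ∑ h, ∑ v, f (v, h) := Finset.sum_le_sum fun h _ => this h
      _ = w := by rw [hw, Fintype.sum_prod_type f, Finset.sum_comm]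
  -- total bad count
  set Bad := ∑ i ∈ S, ∑ h, (if s i h = 0 ∧ ¬ good i h then 1 else 0) with hBad
  have hBadle : 2 * Bad ≤ w := by
    have : Bad = ∑ h, (S.filter (fun i => s i h = 0 ∧ ¬ good i h)).card := by
      rw [hBad, Finset.sum_comm]
      exact Finset.sum_congr rfl fun h _ => (Finset.card_filter _ _).symm
    calc 2 * Bad = 2 * ∑ h, (S.filter (fun i => s i h = 0 ∧ ¬ good i h)).card := by rw [this]
      _ ≤ 2 * ∑ h, (Finset.univ.filter (fun v => f (v, h) = 2)).card := by
          have := Finset.sum_le_sum (fun h (_ : h ∈ (Finset.univ : Finset W)) => hcol h)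
          omega
      _ ≤ w := h2w
  -- main count
  have hmain : S.card * romanDomNum H ≤ w + Bad := by
    calc S.card * romanDomNum H = ∑ _i ∈ S, romanDomNum H := by
          rw [Finset.sum_const, smul_eq_mul]
      _ ≤ ∑ i ∈ S, ∑ h, g i h := Finset.sum_le_sum fun i _ => hper i
      _ ≤ ∑ i ∈ S, ∑ h, (s i h + (if s i h = 0 ∧ ¬ good i h then 1 else 0)) :=
          Finset.sum_le_sum fun i _ => Finset.sum_le_sum fun h _ => hpt i h
      _ = (∑ i ∈ S, ∑ h, s i h) + Bad := by
          rw [hBad, ← Finset.sum_add_distrib]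
          exact Finset.sum_congr rfl fun i _ => Finset.sum_add_distrib
      _ = w + Bad := by rw [hcells]
  rw [← hScard, ← hfsum]
  omega

theorem stmt3 {V W : Type*} [Fintype V] [Fintype W]
    (G : SimpleGraph V) (H : SimpleGraph W) :
    (romanDomNum (G.boxProd H) : ℝ) ≥ 2 * domNum G * romanDomNum H / 3 := by
  have key := key_ineq G H
  rw [ge_iff_le, div_le_iff₀ (by norm_num : (0:ℝ) < 3)]
  have : ((2 * (domNum G * romanDomNum H) : ℕ) : ℝ)
      ≤ ((3 * romanDomNum (G.boxProd H) : ℕ) : ℝ) := Nat.cast_le.mpr key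
  push_cast at this
  linarith
end

section
/- For any graphs G and H, γ_R(G □ H) ≥ (γ(G)·γ_R(H) + γ(G □ H))/2. -/
open Finset

section Aux

variable {V W : Type*} [Fintype V] [Fintype W]

lemma romanDomNum_spec (G : SimpleGraph V) :
    ∃ f : V → ℕ, IsRDF G f ∧ ∑ v, f v = romanDomNum G := by
  have h : ({n | ∃ f : V → ℕ, IsRDF G f ∧ ∑ v, f v = n} : Set ℕ).Nonempty :=
    ⟨∑ v : V, 1, fun _ => 1, ⟨fun _ => one_le_two, fun v hv => absurd hv one_ne_zero⟩, rfl⟩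
  exact Nat.sInf_mem h

lemma romanDomNum_le (G : SimpleGraph V) (f : V → ℕ) (hf : IsRDF G f) :
    romanDomNum G ≤ ∑ v, f v :=
  Nat.sInf_le ⟨f, hf, rfl⟩

lemma domNum_spec (G : SimpleGraph V) :
    ∃ S : Finset V, IsDominatingSet G ↑S ∧ S.card = domNum G := by
  have h : ({n | ∃ S : Finset V, IsDominatingSet G ↑S ∧ S.card = n} : Set ℕ).Nonempty :=
    ⟨(univ : Finset V).card, univ, by intro v hv; simp at hv, rfl⟩
  exact Nat.sInf_mem h

lemma domNum_le (G : SimpleGraph V) (S : Finset V) (hS : IsDominatingSet G ↑S) :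
    domNum G ≤ S.card :=
  Nat.sInf_le ⟨S, hS, rfl⟩

lemma key (G : SimpleGraph V) (H : SimpleGraph W) (f : V × W → ℕ)
    (hf : IsRDF (G.boxProd H) f) :
    domNum G * romanDomNum H ≤ ∑ v : V × W, (f v + if f v = 2 then 1 else 0) := by
  classical
  obtain ⟨S, hS, hScard⟩ := domNum_spec G
  have hrepex : ∃ rep : V → V, ∀ v, rep v ∈ S ∧ (rep v = v ∨ G.Adj (rep v) v) := by
    refine ⟨fun v => if hv : v ∈ S then v else (hS v (by simpa using hv)).choose, fun v => ?_⟩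
    by_cases hv : v ∈ S
    · simp [hv]
    · have hsp := (hS v (by simpa using hv)).choose_spec
      simp only [dif_neg hv]
      exact ⟨by simpa using hsp.1, Or.inr hsp.2⟩
  obtain ⟨rep, hrep⟩ := hrepex
  set μ : V → W → ℕ := fun s h =>
    if ∃ g, rep g = s ∧ f (g, h) = 2 then 2
    else if ∃ g, rep g = s ∧ f (g, h) = 0 ∧ ∃ h', H.Adj h' h ∧ f (g, h') = 2 then 0
    else 1 with hμ
  have hμRDF : ∀ s, IsRDF H (μ s) := by
    intro s
    constructor
    · intro h; simp only [hμ]; split_ifs <;> omega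
    · intro h h0
      simp only [hμ] at h0
      split_ifs at h0 with h2 hz
      obtain ⟨g, hg, _, h', hadj, hf2⟩ := hz
      exact ⟨h', hadj, by simp only [hμ]; rw [if_pos ⟨g, hg, hf2⟩]⟩
  have hμle : ∀ s, romanDomNum H ≤ ∑ h, μ s h :=
    fun s => romanDomNum_le H (μ s) (hμRDF s)
  have hrow : ∀ h : W, (∑ s ∈ S, μ s h) ≤
      ∑ g : V, (f (g, h) + if f (g, h) = 2 then 1 else 0) := by
    intro h
    set n1 := (univ.filter fun g : V => f (g, h) = 1).card with hn1
    set n2 := (univ.filter fun g : V => f (g, h) = 2).card with hn2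
    set pT : V → Prop := fun s => ∃ g, rep g = s ∧ f (g, h) = 2 with hpT
    set pZ : V → Prop := fun s =>
      ∃ g, rep g = s ∧ f (g, h) = 0 ∧ ∃ h', H.Adj h' h ∧ f (g, h') = 2 with hpZ
    set p1 : V → Prop := fun s => ∃ g, rep g = s ∧ f (g, h) = 1 with hp1
    set pB : V → Prop := fun s => ¬ pT s ∧ ¬ pZ s ∧ ¬ p1 s with hpB
    -- card of T
    have cardT : (S.filter pT).card ≤ n2 := by
      have : ∀ s ∈ S.filter pT, pT s := fun s hs => (mem_filter.1 hs).2
      refine Finset.card_le_card_of_injOn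
        (fun s => if hs : pT s then hs.choose else s) (fun s hs => ?_) ?_
      · have hps := this s hs
        simp only [dif_pos hps]
        exact mem_filter.2 ⟨mem_univ _, hps.choose_spec.2⟩
      · intro a ha b hb hab
        have hpa := this a (by simpa using ha)
        have hpb := this b (by simpa using hb)
        simp only [dif_pos hpa, dif_pos hpb] at hab
        rw [← hpa.choose_spec.1, ← hpb.choose_spec.1, hab]
    have cardO : (S.filter p1).card ≤ n1 := by
      have : ∀ s ∈ S.filter p1, p1 s := fun s hs => (mem_filter.1 hs).2
      refine Finset.card_le_card_of_injOn
        (fun s => if hs : p1 s then hs.choose else s) (fun s hs => ?_) ?_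
      · have hps := this s hs
        simp only [dif_pos hps]
        exact mem_filter.2 ⟨mem_univ _, hps.choose_spec.2⟩
      · intro a ha b hb hab
        have hpa := this a (by simpa using ha)
        have hpb := this b (by simpa using hb)
        simp only [dif_pos hpa, dif_pos hpb] at hab
        rw [← hpa.choose_spec.1, ← hpb.choose_spec.1, hab]
    -- card of B via domination
    set B := S.filter pB with hB
    have hBsub : B ⊆ S := filter_subset _ _
    have cardB : B.card ≤ n2 := by
      set D : Finset V := (univ.filter fun g : V => f (g, h) = 2) ∪ (S \ B) with hD
      have hDdom : IsDominatingSet G ↑D := by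
        intro v hv
        have hv' : v ∉ D := by simpa using hv
        have hfv2 : f (v, h) ≠ 2 := fun hh =>
          hv' (mem_union_left _ (mem_filter.2 ⟨mem_univ _, hh⟩))
        by_cases hBv : rep v ∈ B
        · have hpBv : pB (rep v) := (mem_filter.1 hBv).2
          have hfv1 : f (v, h) ≠ 1 := fun hh => hpBv.2.2 ⟨v, rfl, hh⟩
          have hfv0 : f (v, h) = 0 := by have := hf.1 (v, h); omega
          obtain ⟨u, hadj, hu2⟩ := hf.2 (v, h) hfv0
          rw [SimpleGraph.boxProd_adj] at hadj
          rcases hadj with ⟨hGadj, hsnd⟩ | ⟨hHadj, hfst⟩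
          · have hGadj' : G.Adj u.1 v := hGadj
            have hsnd' : u.2 = h := hsnd
            refine ⟨u.1, ?_, hGadj'⟩
            have hu : f (u.1, h) = 2 := by rw [← hsnd', Prod.mk.eta]; exact hu2
            exact Finset.mem_coe.2 (mem_union_left _ (mem_filter.2 ⟨mem_univ _, hu⟩))
          · have hfst' : u.1 = v := hfst
            have hHadj' : H.Adj u.2 h := hHadj
            have hval : f (v, u.2) = 2 := by rw [← hfst', Prod.mk.eta]; exact hu2
            have hcontra : pZ (rep v) := by
              rw [hpZ]
              exact ⟨v, rfl, hfv0, u.2, hHadj', hval⟩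
            exact absurd hcontra hpBv.2.1
        · have hmem : rep v ∈ D := mem_union_right _ (mem_sdiff.2 ⟨(hrep v).1, hBv⟩)
          rcases (hrep v).2 with heq | hadj
          · exact absurd (heq ▸ hmem) hv'
          · exact ⟨rep v, Finset.mem_coe.2 hmem, hadj⟩
      have hDcard : domNum G ≤ D.card := domNum_le G D hDdom
      have hDle : D.card ≤ n2 + (S.card - B.card) := by
        refine le_trans (card_union_le _ _) ?_
        rw [card_sdiff_of_subset hBsub]
      have hBS : B.card ≤ S.card := card_le_card hBsub
      omega
    -- pointwise bound and sum
    have hpoint : ∀ s ∈ S, μ s h ≤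
        (if pT s then 2 else 0) + (if p1 s ∧ ¬ pT s ∧ ¬ pZ s then 1 else 0) +
          (if pB s then 1 else 0) := by
      intro s _
      by_cases c1 : ∃ g, rep g = s ∧ f (g, h) = 2
      · have h1 : pT s := c1
        simp only [hμ, if_pos c1, if_pos h1]
        exact le_trans (Nat.le_add_right 2 _) (Nat.le_add_right _ _)
      · by_cases c2 : ∃ g, rep g = s ∧ f (g, h) = 0 ∧ ∃ h', H.Adj h' h ∧ f (g, h') = 2
        · simp only [hμ, if_neg c1, if_pos c2]
          exact Nat.zero_le _
        · have h1 : ¬ pT s := c1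
          have h2 : ¬ pZ s := c2
          simp only [hμ, if_neg c1, if_neg c2, if_neg h1]
          by_cases h3 : p1 s
          · rw [if_pos ⟨h3, h1, h2⟩, if_neg (show ¬ pB s from fun hh => hh.2.2 h3)]
          · rw [if_neg (show ¬ (p1 s ∧ ¬ pT s ∧ ¬ pZ s) from fun hh => h3 hh.1),
              if_pos (show pB s from ⟨h1, h2, h3⟩)]
    have hsum1 : ∑ s ∈ S, (if pT s then (2:ℕ) else 0) = 2 * (S.filter pT).card := by
      rw [← Finset.sum_filter, Finset.sum_const, smul_eq_mul, mul_comm]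
    have hsum2 : ∑ s ∈ S, (if p1 s ∧ ¬ pT s ∧ ¬ pZ s then (1:ℕ) else 0) ≤
        (S.filter p1).card := by
      rw [← Finset.sum_filter, Finset.sum_const, smul_eq_mul, mul_one]
      apply card_le_card
      intro s hs
      rw [mem_filter] at hs ⊢
      exact ⟨hs.1, hs.2.1⟩
    have hsum3 : ∑ s ∈ S, (if pB s then (1:ℕ) else 0) = B.card := by
      rw [← Finset.sum_filter, Finset.sum_const, smul_eq_mul, mul_one]
    have hfin : n1 + 3 * n2 ≤ ∑ g : V, (f (g, h) + if f (g, h) = 2 then 1 else 0) := by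
      have hpt : ∀ g : V, (if f (g, h) = 1 then (1:ℕ) else 0) +
          (if f (g, h) = 2 then 3 else 0) ≤ f (g, h) + (if f (g, h) = 2 then 1 else 0) := by
        intro g; split_ifs <;> omega
      calc n1 + 3 * n2
          = ∑ g : V, ((if f (g, h) = 1 then (1:ℕ) else 0) +
              (if f (g, h) = 2 then 3 else 0)) := by
            rw [Finset.sum_add_distrib, ← Finset.sum_filter, ← Finset.sum_filter,
              Finset.sum_const, Finset.sum_const, smul_eq_mul, smul_eq_mul, mul_one,
              mul_comm]
        _ ≤ _ := Finset.sum_le_sum (fun g _ => hpt g)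
    calc ∑ s ∈ S, μ s h
        ≤ ∑ s ∈ S, ((if pT s then 2 else 0) + (if p1 s ∧ ¬ pT s ∧ ¬ pZ s then 1 else 0) +
            (if pB s then 1 else 0)) := Finset.sum_le_sum hpoint
      _ = 2 * (S.filter pT).card +
            (∑ s ∈ S, (if p1 s ∧ ¬ pT s ∧ ¬ pZ s then (1:ℕ) else 0)) + B.card := by
          rw [Finset.sum_add_distrib, Finset.sum_add_distrib, hsum1, hsum3]
      _ ≤ 2 * n2 + n1 + n2 := by
          have h4 := le_trans hsum2 cardO
          have h5 := cardT
          have h6 := cardB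
          linarith
      _ ≤ _ := by linarith [hfin]
  -- combine
  calc domNum G * romanDomNum H = S.card * romanDomNum H := by rw [hScard]
    _ ≤ ∑ s ∈ S, ∑ h, μ s h := by
        rw [← smul_eq_mul]
        exact Finset.card_nsmul_le_sum S _ _ (fun s _ => hμle s)
    _ = ∑ h, ∑ s ∈ S, μ s h := Finset.sum_comm
    _ ≤ ∑ h : W, ∑ g : V, (f (g, h) + if f (g, h) = 2 then 1 else 0) :=
        Finset.sum_le_sum (fun h _ => hrow h)
    _ = ∑ v : V × W, (f v + if f v = 2 then 1 else 0) := by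
        rw [Fintype.sum_prod_type]
        exact Finset.sum_comm

end Aux

theorem stmt4 {V W : Type*} [Fintype V] [Fintype W]
    (G : SimpleGraph V) (H : SimpleGraph W) :
    (romanDomNum (G.boxProd H) : ℝ) ≥
      ((domNum G : ℝ) * romanDomNum H + domNum (G.boxProd H)) / 2 := by
  classical
  obtain ⟨f, hf, hw⟩ := romanDomNum_spec (G.boxProd H)
  set N1 := (univ.filter fun v : V × W => f v = 1).card with hN1
  set N2 := (univ.filter fun v : V × W => f v = 2).card with hN2
  have h3 : ∑ v, f v = N1 + 2 * N2 := by
    have hpt : ∀ v : V × W, f v = (if f v = 1 then 1 else 0) + (if f v = 2 then 2 else 0) := by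
      intro v; have := hf.1 v; split_ifs <;> omega
    rw [Finset.sum_congr rfl (fun v _ => hpt v), Finset.sum_add_distrib,
      ← Finset.sum_filter, ← Finset.sum_filter, Finset.sum_const, Finset.sum_const,
      smul_eq_mul, smul_eq_mul, mul_one, mul_comm]
  have h1 : domNum G * romanDomNum H ≤ ∑ v, f v + N2 := by
    have hk := key G H f hf
    have e : ∑ v : V × W, (f v + if f v = 2 then 1 else 0) = ∑ v, f v + N2 := by
      rw [Finset.sum_add_distrib, ← Finset.sum_filter, Finset.sum_const, smul_eq_mul, mul_one]
    rw [e] at hk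
    exact hk
  have h2 : domNum (G.boxProd H) ≤ N1 + N2 := by
    set D : Finset (V × W) := univ.filter (fun v => f v ≠ 0) with hD
    have hDdom : IsDominatingSet (G.boxProd H) ↑D := by
      intro v hv
      have hv0 : f v = 0 := by
        by_contra hc
        exact hv (by simp [hD, hc])
      obtain ⟨u, hadj, hu2⟩ := hf.2 v hv0
      exact ⟨u, by simp [hD, hu2], hadj⟩
    have hsub : D ⊆ (univ.filter fun v : V × W => f v = 1) ∪
        (univ.filter fun v : V × W => f v = 2) := by
      intro v hv
      simp only [hD, mem_filter, mem_univ, true_and] at hv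
      have := hf.1 v
      simp only [mem_union, mem_filter, mem_univ, true_and]
      omega
    calc domNum (G.boxProd H) ≤ D.card := domNum_le _ D hDdom
      _ ≤ _ := card_le_card hsub
      _ ≤ N1 + N2 := card_union_le _ _
  have hfin : domNum G * romanDomNum H + domNum (G.boxProd H) ≤
      2 * romanDomNum (G.boxProd H) := by omega
  rw [ge_iff_le, div_le_iff₀ (by norm_num : (0:ℝ) < 2)]
  have hc : ((domNum G * romanDomNum H + domNum (G.boxProd H) : ℕ) : ℝ) ≤
      ((2 * romanDomNum (G.boxProd H) : ℕ) : ℝ) := Nat.cast_le.2 hfin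
  push_cast at hc
  linarith
end

section
/- For any graphs G and H, γ_R(G □ H) ≥ γ_R(G)·γ_R(H)/3. -/
open Finset

lemma keyIneq {V W : Type*} [Fintype V] [Fintype W]
    (G : SimpleGraph V) (H : SimpleGraph W) :
    romanDomNum G * romanDomNum H ≤ 3 * romanDomNum (G.boxProd H) := by
  classical
  -- a minimum RDF of the product
  obtain ⟨f, ⟨hf2, hf0⟩, hfw⟩ :
      ∃ f : V × W → ℕ, IsRDF (G.boxProd H) f ∧ ∑ v, f v = romanDomNum (G.boxProd H) :=
by
    have hne : {n | ∃ f : V × W → ℕ, IsRDF (G.boxProd H) f ∧ ∑ v, f v = n}.Nonempty :=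
      ⟨∑ _v : V × W, 1, fun _ => 1,
        ⟨fun _ => one_le_two, fun v h => absurd h one_ne_zero⟩, rfl⟩
    exact Nat.sInf_mem hne
  set w : ℕ := romanDomNum (G.boxProd H) with hw
  -- a minimum dominating set of G
  obtain ⟨U, hUdom, hUcard⟩ :
      ∃ S : Finset V, IsDominatingSet G ↑S ∧ S.card = domNum G :=
by
    have hne : {n | ∃ S : Finset V, IsDominatingSet G ↑S ∧ S.card = n}.Nonempty :=
      ⟨Fintype.card V, Finset.univ, fun v hv => absurd (by simp) hv, Finset.card_univ⟩
    exact Nat.sInf_mem hne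
  -- choice of dominator
  have hpex : ∀ v : V, ∃ u, u ∈ U ∧ (u = v ∨ G.Adj u v) := by
    intro v
    by_cases hv : v ∈ (U : Set V)
    · exact ⟨v, hv, Or.inl rfl⟩
    · obtain ⟨u, hu, hadj⟩ := hUdom v hv; exact ⟨u, hu, Or.inr hadj⟩
  choose p hpU hpadj using hpex
  -- cell weight
  set cw : V → W → ℕ := fun u h => ∑ g ∈ univ.filter (fun g => p g = u), f (g, h) with hcwdef
  -- bad pairs
  set Bad : V → W → Prop :=
    fun u h => ∀ g, p g = u → f (g, h) = 0 ∧ ∀ h', H.Adj h h' → f (g, h') ≠ 2 with hBaddef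
  set gfun : V → W → ℕ :=
    fun u h => min 2 (cw u h) + (if Bad u h then 1 else 0) with hgdef
  -- gfun u is an RDF of H
  have hBadcw : ∀ u h, Bad u h → cw u h = 0 := by
    intro u h hb
    exact Finset.sum_eq_zero fun g hg => (hb g (by simpa using hg)).1
  have hgRDF : ∀ u : V, IsRDF H (gfun u) := by
    intro u
    constructor
    · intro h
      by_cases hb : Bad u h
      · show 2 ⊓ cw u h + (if Bad u h then 1 else 0) ≤ 2
        rw [if_pos hb, hBadcw u h hb]
        simp
      · show 2 ⊓ cw u h + (if Bad u h then 1 else 0) ≤ 2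
        rw [if_neg hb]
        simp
    · intro h hzero
      have hzero' : 2 ⊓ cw u h + (if Bad u h then 1 else 0) = 0 := hzero
      have hb : ¬ Bad u h := by
        intro hb
        rw [if_pos hb] at hzero'
        omega
      rw [if_neg hb] at hzero'
      have hcw0 : cw u h = 0 := by
        rcases le_total 2 (cw u h) with h' | h'
        · rw [min_eq_left h'] at hzero'
          omega
        · rw [min_eq_right h'] at hzero'
          omega
      have hb' : ¬ ∀ g, p g = u → f (g, h) = 0 ∧ ∀ h', H.Adj h h' → f (g, h') ≠ 2 := hb
      push_neg at hb'
      obtain ⟨g, hpg, hng⟩ := hb'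
      have hfg0 : f (g, h) = 0 :=
        (Finset.sum_eq_zero_iff).mp hcw0 g (by simp [hpg])
      obtain ⟨h', hadj, hf2'⟩ : ∃ h', H.Adj h h' ∧ f (g, h') = 2 := hng hfg0
      refine ⟨h', hadj.symm, ?_⟩
      have hcw2 : 2 ≤ cw u h' := by
        have hle : f (g, h') ≤ cw u h' :=
          Finset.single_le_sum (f := fun g => f (g, h')) (fun _ _ => Nat.zero_le _)
            (by simp [hpg])
        omega
      have hnb : ¬ Bad u h' := by
        intro hb'
        have := (hb' g hpg).1
        omega
      show 2 ⊓ cw u h' + (if Bad u h' then 1 else 0) = 2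
      rw [if_neg hnb, min_eq_left hcw2]
  -- per-tube inequality
  have htube : ∀ u ∈ U, romanDomNum H ≤ (∑ h : W, cw u h) + (∑ h : W, if Bad u h then 1 else 0) := by
    intro u _
    have h1 : romanDomNum H ≤ ∑ h : W, gfun u h :=
      Nat.sInf_le ⟨gfun u, hgRDF u, rfl⟩
    calc romanDomNum H ≤ ∑ h : W, gfun u h := h1
      _ ≤ (∑ h : W, cw u h) + (∑ h : W, if Bad u h then 1 else 0) := by
          rw [← Finset.sum_add_distrib]
          exact Finset.sum_le_sum fun h _ => by
            simp only [hgdef]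
            exact Nat.add_le_add_right (Nat.min_le_right _ _) _
  -- summing over U
  have hsumU : U.card * romanDomNum H ≤ w + ∑ u ∈ U, ∑ h : W, (if Bad u h then 1 else 0) := by
    have h1 : ∑ _u ∈ U, romanDomNum H ≤
        ∑ u ∈ U, ((∑ h : W, cw u h) + (∑ h : W, if Bad u h then 1 else 0)) :=
      Finset.sum_le_sum htube
    have h2 : ∑ u ∈ U, ∑ h : W, cw u h = w := by
      have : ∑ u ∈ U, ∑ h : W, cw u h = ∑ u ∈ U, ∑ g ∈ univ.filter (fun g => p g = u), ∑ h : W, f (g, h) := by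
        apply Finset.sum_congr rfl
        intro u _
        rw [Finset.sum_comm]
      rw [this, Finset.sum_fiberwise_of_maps_to (fun g _ => hpU g) (fun g => ∑ h : W, f (g, h))]
      rw [← Fintype.sum_prod_type, hfw]
    simpa [Finset.sum_add_distrib, h2, Finset.sum_const, Nat.smul_one_eq_cast] using h1
  set B : ℕ := ∑ u ∈ U, ∑ h : W, (if Bad u h then 1 else 0) with hBdef
  -- second count: in each row, #bad tubes ≤ #twos in the row
  have hrow : ∀ h : W,
      (U.filter (fun u => Bad u h)).card ≤ (univ.filter (fun g => f (g, h) = 2)).card := by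
    intro h
    set X := U.filter (fun u => Bad u h) with hX
    set T := univ.filter (fun g => f (g, h) = 2) with hT
    have hdom : IsDominatingSet G ↑((U \ X) ∪ T) := by
      intro v hv
      by_cases hb : Bad (p v) h
      · have h1 := (hb v rfl).1
        obtain ⟨⟨a, b⟩, hadj, hfa⟩ := hf0 (v, h) h1
        rcases SimpleGraph.boxProd_adj.mp hadj with ⟨hGa, hbh⟩ | ⟨hHb, hav⟩
        · refine ⟨a, ?_, hGa⟩
          have haT : a ∈ T := by
            rw [hT, Finset.mem_filter]
            refine ⟨Finset.mem_univ a, ?_⟩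
            dsimp at hbh
            rw [hbh] at hfa
            exact hfa
          exact Finset.mem_coe.mpr (Finset.mem_union.mpr (Or.inr haT))
        · exfalso
          dsimp at hav
          rw [hav] at hfa
          exact ((hb v rfl).2 b hHb.symm) hfa
      · have hmem : p v ∈ U \ X := Finset.mem_sdiff.mpr ⟨hpU v, by
          rw [hX, Finset.mem_filter]; tauto⟩
        have hmem' : p v ∈ ((U \ X) ∪ T : Finset V) := Finset.mem_union.mpr (Or.inl hmem)
        rcases hpadj v with he | ha
        · exact absurd (Finset.mem_coe.mpr (he ▸ hmem')) hv
        · exact ⟨p v, Finset.mem_coe.mpr hmem', ha⟩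
    have hkle : domNum G ≤ ((U \ X) ∪ T).card := Nat.sInf_le ⟨_, hdom, rfl⟩
    have hXU : X ⊆ U := Finset.filter_subset _ _
    have hcard : ((U \ X) ∪ T).card ≤ (U.card - X.card) + T.card := by
      calc ((U \ X) ∪ T).card ≤ (U \ X).card + T.card := Finset.card_union_le _ _
        _ = (U.card - X.card) + T.card := by rw [Finset.card_sdiff_of_subset hXU]
    have hXcard : X.card ≤ U.card := Finset.card_le_card hXU
    omega
  -- each row's twos cost at least twice their number
  have htw : ∀ h : W, 2 * (univ.filter (fun g => f (g, h) = 2)).card ≤ ∑ g : V, f (g, h) := by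
    intro h
    have h1 : ∑ g ∈ univ.filter (fun g => f (g, h) = 2), f (g, h)
        = 2 * (univ.filter (fun g => f (g, h) = 2)).card := by
      rw [Finset.sum_congr rfl (fun g hg => (Finset.mem_filter.mp hg).2),
        Finset.sum_const, smul_eq_mul, mul_comm]
    calc 2 * (univ.filter (fun g => f (g, h) = 2)).card
        = ∑ g ∈ univ.filter (fun g => f (g, h) = 2), f (g, h) := h1.symm
      _ ≤ ∑ g : V, f (g, h) :=
          Finset.sum_le_sum_of_subset (Finset.filter_subset _ _)
  have hwrows : ∑ h : W, ∑ g : V, f (g, h) = w := by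
    rw [← hfw, Fintype.sum_prod_type]
    exact Finset.sum_comm
  have hB2 : 2 * B ≤ w := by
    have hswap : B = ∑ h : W, ∑ u ∈ U, (if Bad u h then 1 else 0) := Finset.sum_comm
    have hcnt : ∀ h : W, ∑ u ∈ U, (if Bad u h then 1 else 0)
        = (U.filter (fun u => Bad u h)).card := fun h => (Finset.card_filter _ _).symm
    calc 2 * B = ∑ h : W, 2 * ((U.filter (fun u => Bad u h)).card) := by
          rw [hswap, Finset.mul_sum]
          exact Finset.sum_congr rfl fun h _ => by rw [hcnt]
      _ ≤ ∑ h : W, 2 * ((univ.filter (fun g => f (g, h) = 2)).card) :=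
          Finset.sum_le_sum fun h _ => Nat.mul_le_mul_left 2 (hrow h)
      _ ≤ ∑ h : W, ∑ g : V, f (g, h) := Finset.sum_le_sum fun h _ => htw h
      _ = w := hwrows
  -- Roman domination of G is at most twice the domination number
  have hGR : romanDomNum G ≤ 2 * U.card := by
    have hr : IsRDF G (fun v => if v ∈ U then 2 else 0) := by
      constructor
      · intro v
        dsimp only
        split <;> omega
      · intro v hv
        have hv' : (if v ∈ U then 2 else 0) = 0 := hv
        have hvU : v ∉ (U : Set V) := by
          intro hvU
          rw [if_pos (Finset.mem_coe.mp hvU)] at hv'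
          omega
        obtain ⟨u, hu, hadj⟩ := hUdom v hvU
        refine ⟨u, hadj, ?_⟩
        show (if u ∈ U then 2 else 0) = 2
        rw [if_pos (Finset.mem_coe.mp hu)]
    have hle : romanDomNum G ≤ ∑ v : V, (if v ∈ U then 2 else 0) :=
      Nat.sInf_le ⟨_, hr, rfl⟩
    calc romanDomNum G ≤ ∑ v : V, (if v ∈ U then 2 else 0) := hle
      _ = 2 * U.card := by
          rw [Finset.sum_ite_mem, Finset.univ_inter, Finset.sum_const, smul_eq_mul, mul_comm]
  calc romanDomNum G * romanDomNum H
      ≤ (2 * U.card) * romanDomNum H := Nat.mul_le_mul_right _ hGR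
    _ = 2 * (U.card * romanDomNum H) := by ring
    _ ≤ 2 * (w + B) := Nat.mul_le_mul_left 2 hsumU
    _ = 2 * w + 2 * B := by ring
    _ ≤ 2 * w + w := by omega
    _ = 3 * w := by ring

theorem stmt5 {V W : Type*} [Fintype V] [Fintype W]
    (G : SimpleGraph V) (H : SimpleGraph W) :
    (romanDomNum (G.boxProd H) : ℝ) ≥ (romanDomNum G : ℝ) * romanDomNum H / 3 := by
  have key := keyIneq G H
  have hcast : ((romanDomNum G * romanDomNum H : ℕ) : ℝ)
      ≤ ((3 * romanDomNum (G.boxProd H) : ℕ) : ℝ) := Nat.cast_le.mpr key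
  push_cast at hcast
  rw [ge_iff_le, div_le_iff₀ (by norm_num : (0:ℝ) < 3)]
  linarith
end

section
/- For any graphs G and H, γ(G □ H) ≥ γ(G)·γ_R(H)/3. -/
open Finset

lemma key_s6 {V W : Type*} [Fintype V] [Fintype W]
    (G : SimpleGraph V) (H : SimpleGraph W) :
    domNum G * romanDomNum H ≤ 3 * domNum (G.boxProd H) := by
  classical
  have hDmem : domNum (G.boxProd H) ∈
      {n | ∃ S : Finset (V × W), IsDominatingSet (G.boxProd H) ↑S ∧ S.card = n} :=
    Nat.sInf_mem ⟨Finset.univ.card, Finset.univ, fun v hv => absurd (by simp) hv, rfl⟩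
  obtain ⟨D, hD, hDcard⟩ := hDmem
  have hTmem : domNum G ∈ {n | ∃ S : Finset V, IsDominatingSet G ↑S ∧ S.card = n} :=
    Nat.sInf_mem ⟨Finset.univ.card, Finset.univ, fun v hv => absurd (by simp) hv, rfl⟩
  obtain ⟨T, hT, hTcard⟩ := hTmem
  -- projection π : V → T
  have hpi : ∀ g : V, ∃ u, u ∈ T ∧ (u = g ∨ G.Adj u g) := by
    intro g
    by_cases hg : g ∈ T
    · exact ⟨g, hg, Or.inl rfl⟩
    · obtain ⟨u, hu, hadj⟩ := hT g (by simpa using hg)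
      exact ⟨u, by simpa using hu, Or.inr hadj⟩
  choose π hπT hπadj using hpi
  set vdom : V → W → Prop := fun u h => ∃ x ∈ D, π x.1 = u ∧ (x.2 = h ∨ H.Adj x.2 h) with hvdom
  set col : W → Finset V := fun h => (D.filter fun x => x.2 = h).image Prod.fst with hcol
  set Q : V → Finset W := fun u => (D.filter fun x => π x.1 = u).image Prod.snd with hQ
  -- Claim A
  have claimA : ∀ h : W, domNum G ≤ (col h).card + (T.filter fun u => vdom u h).card := by
    intro h
    set S : Finset V := col h ∪ T.filter (fun u => vdom u h) with hS
    have hSdom : IsDominatingSet G ↑S := by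
      intro g hg
      by_cases hv : vdom (π g) h
      · have hmem : π g ∈ S := by
          simp only [hS, Finset.mem_union, Finset.mem_filter]
          exact Or.inr ⟨hπT g, hv⟩
        rcases hπadj g with heq | hadj
        · exact absurd (Finset.mem_coe.mpr (heq ▸ hmem)) hg
        · exact ⟨π g, Finset.mem_coe.mpr hmem, hadj⟩
      · have hgh : ((g, h) : V × W) ∉ (D : Set (V × W)) := by
          intro hmem
          exact hv ⟨(g, h), Finset.mem_coe.mp hmem, rfl, Or.inl rfl⟩
        obtain ⟨x, hxD, hxadj⟩ := hD (g, h) hgh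
        rw [SimpleGraph.boxProd_adj] at hxadj
        rcases hxadj with ⟨hadj, heq⟩ | ⟨hadj, heq⟩
        · refine ⟨x.1, ?_, hadj⟩
          simp only [hS, Finset.coe_union, Set.mem_union]
          left
          simp only [hcol, Finset.coe_image, Set.mem_image]
          exact ⟨x, by simp [Finset.mem_filter, Finset.mem_coe.mp hxD, heq], rfl⟩
        · exact absurd ⟨x, Finset.mem_coe.mp hxD, by rw [heq], Or.inr hadj⟩ hv
    calc domNum G ≤ S.card := Nat.sInf_le ⟨S, hSdom, rfl⟩
      _ ≤ _ := Finset.card_union_le _ _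
  -- Claim B
  have claimB : ∀ u ∈ T, romanDomNum H ≤
      2 * (Q u).card + (Finset.univ.filter fun h => ¬ vdom u h).card := by
    intro u _
    set f : W → ℕ := fun h => if h ∈ Q u then 2 else if vdom u h then 0 else 1 with hf
    have hRDF : IsRDF H f := by
      constructor
      · intro v
        simp only [hf]
        split_ifs <;> omega
      · intro v hv
        simp only [hf] at hv
        split_ifs at hv with h1 h2
        obtain ⟨x, hxD, hxπ, hxh⟩ := h2
        have hx2Q : x.2 ∈ Q u := by
          simp only [hQ, Finset.mem_image, Finset.mem_filter]
          exact ⟨x, ⟨hxD, hxπ⟩, rfl⟩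
        rcases hxh with heq | hadj
        · exact absurd (heq ▸ hx2Q) h1
        · exact ⟨x.2, hadj, by simp [hf, hx2Q]⟩
    have h1 : romanDomNum H ≤ ∑ h, f h := Nat.sInf_le ⟨f, hRDF, rfl⟩
    have h2 : ∑ h, f h ≤
        (∑ h, if h ∈ Q u then 2 else 0) + ∑ h, if vdom u h then 0 else 1 := by
      rw [← Finset.sum_add_distrib]
      apply Finset.sum_le_sum
      intro h _
      simp only [hf]
      split_ifs <;> omega
    have h3 : (∑ h, if h ∈ Q u then (2:ℕ) else 0) = 2 * (Q u).card := by
      rw [Finset.sum_ite_mem, Finset.univ_inter, Finset.sum_const, smul_eq_mul, mul_comm]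
    have h4 : (∑ h, if vdom u h then (0:ℕ) else 1) =
        (Finset.univ.filter fun h => ¬ vdom u h).card := by
      rw [Finset.card_filter]
      apply Finset.sum_congr rfl
      intro h _
      by_cases hv : vdom u h <;> simp [hv]
    omega
  -- Sum of Q cards
  have c1 : ∑ u ∈ T, (Q u).card ≤ D.card := by
    have := Finset.card_eq_sum_card_fiberwise (f := fun x : V × W => π x.1)
      (s := D) (t := T) (fun x _ => hπT x.1)
    calc ∑ u ∈ T, (Q u).card ≤ ∑ u ∈ T, (D.filter fun x => π x.1 = u).card :=
          Finset.sum_le_sum fun u _ => Finset.card_image_le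
      _ = D.card := this.symm
  -- Sum of non-vdom counts
  have c2 : ∑ u ∈ T, (Finset.univ.filter fun h => ¬ vdom u h).card ≤ D.card := by
    have swap : ∑ u ∈ T, (Finset.univ.filter fun h => ¬ vdom u h).card
        = ∑ h : W, (T.filter fun u => ¬ vdom u h).card := by
      simp only [Finset.card_filter]
      exact Finset.sum_comm
    rw [swap]
    have step : ∀ h : W, (T.filter fun u => ¬ vdom u h).card ≤
        (D.filter fun x => x.2 = h).card := by
      intro h
      have hsplit := Finset.card_filter_add_card_filter_not
        (s := T) (p := fun u => vdom u h)
      have hA := claimA h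
      have hcle : (col h).card ≤ (D.filter fun x => x.2 = h).card :=
        Finset.card_image_le
      omega
    calc ∑ h : W, (T.filter fun u => ¬ vdom u h).card
        ≤ ∑ h : W, (D.filter fun x => x.2 = h).card := Finset.sum_le_sum fun h _ => step h
      _ = D.card := (Finset.card_eq_sum_card_fiberwise
            (f := fun x : V × W => x.2) (s := D) (t := Finset.univ)
            (fun x _ => Finset.mem_univ _)).symm
  -- combine
  have main : T.card * romanDomNum H ≤ 3 * D.card := by
    calc T.card * romanDomNum H = ∑ _u ∈ T, romanDomNum H := by
          rw [Finset.sum_const, smul_eq_mul]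
      _ ≤ ∑ u ∈ T, (2 * (Q u).card + (Finset.univ.filter fun h => ¬ vdom u h).card) :=
          Finset.sum_le_sum claimB
      _ = 2 * (∑ u ∈ T, (Q u).card) + ∑ u ∈ T, (Finset.univ.filter fun h => ¬ vdom u h).card := by
          rw [Finset.sum_add_distrib, Finset.mul_sum]
      _ ≤ 3 * D.card := by omega
  rw [← hTcard, ← hDcard]
  exact main


theorem stmt6 {V W : Type*} [Fintype V] [Fintype W]
    (G : SimpleGraph V) (H : SimpleGraph W) :
    (domNum (G.boxProd H) : ℝ) ≥ (domNum G : ℝ) * romanDomNum H / 3 := by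
  rw [ge_iff_le, div_le_iff₀ (by norm_num : (0:ℝ) < 3)]
  have h : ((domNum G * romanDomNum H : ℕ) : ℝ) ≤ ((3 * domNum (G.boxProd H) : ℕ) : ℝ) :=
    Nat.cast_le.mpr (key_s6 G H)
  push_cast at h
  linarith
end

section
/- If G has an efficient dominating set (a dominating set S with the closed neighborhoods N[u], u ∈ S, pairwise disjoint), then for any graph H, γ_R(G □ H) ≥ γ(G)·γ_R(H). -/
open Finset

theorem stmt9 {V W : Type*} [Fintype V] [Fintype W]
    (G : SimpleGraph V) (H : SimpleGraph W) (hG : HasEfficientDomSet G) :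
    romanDomNum (G.boxProd H) ≥ domNum G * romanDomNum H := by
  classical
  obtain ⟨S, hSdom, hSdisj⟩ := hG
  have hne : {n | ∃ f : V × W → ℕ, IsRDF (G.boxProd H) f ∧ ∑ v, f v = n}.Nonempty :=
    ⟨∑ _v : V × W, 2, fun _ => 2, ⟨fun _ => le_refl 2, fun v h => by simp at h⟩, rfl⟩
  obtain ⟨f, hf, hfsum⟩ := Nat.sInf_mem hne
  have hval : romanDomNum (G.boxProd H) = ∑ v, f v := hfsum.symm
  -- each projection is an RDF of H
  have hgRDF : ∀ u : V,
      IsRDF H (fun w => min 2 (∑ v ∈ insert u (G.neighborFinset u), f (v, w))) := by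
    intro u
    refine ⟨fun w => min_le_left _ _, fun w hw => ?_⟩
    replace hw : min 2 (∑ v ∈ insert u (G.neighborFinset u), f (v, w)) = 0 := hw
    have hsum0 : ∑ v ∈ insert u (G.neighborFinset u), f (v, w) = 0 := by clear hne hfsum hval hSdom hSdisj; omega
    have hzero : ∀ v ∈ insert u (G.neighborFinset u), f (v, w) = 0 := fun v hv =>
      (Finset.sum_eq_zero_iff.mp hsum0) v hv
    have hu0 : f (u, w) = 0 := hzero u (Finset.mem_insert_self _ _)
    obtain ⟨⟨a, b⟩, hadj, hab2⟩ := hf.2 (u, w) hu0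
    rw [SimpleGraph.boxProd_adj] at hadj
    rcases hadj with ⟨hGa, hb⟩ | ⟨hHb, ha⟩
    · exfalso
      have hmema : a ∈ insert u (G.neighborFinset u) := Finset.mem_insert_of_mem
        ((SimpleGraph.mem_neighborFinset _ _ _).mpr hGa.symm)
      have h0 := hzero a hmema
      simp only at hb
      rw [hb] at hab2
      clear hne hfsum hval hSdom hSdisj
      omega
    · refine ⟨b, hHb, ?_⟩
      show min 2 (∑ v ∈ insert u (G.neighborFinset u), f (v, b)) = 2
      simp only at ha
      have hmem : u ∈ insert u (G.neighborFinset u) := Finset.mem_insert_self _ _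
      have hle : f (u, b) ≤ ∑ v ∈ insert u (G.neighborFinset u), f (v, b) :=
        Finset.single_le_sum (f := fun v => f (v, b)) (fun v _ => Nat.zero_le _) hmem
      rw [ha] at hab2
      clear hne hfsum hval hSdom hSdisj
      omega
  have hgsum : ∀ u : V,
      romanDomNum H ≤ ∑ w, min 2 (∑ v ∈ insert u (G.neighborFinset u), f (v, w)) :=
    fun u => Nat.sInf_le ⟨_, hgRDF u, rfl⟩
  -- disjointness of closed neighborhood finsets on S
  have hdisj : ∀ u ∈ S, ∀ v ∈ S, u ≠ v →
      Disjoint (insert u (G.neighborFinset u)) (insert v (G.neighborFinset v)) := by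
    intro u hu v hv huv
    have h := hSdisj u hu v hv huv
    rw [← Finset.disjoint_coe]
    simpa [Finset.coe_insert, SimpleGraph.neighborFinset_def, Set.coe_toFinset] using h
  have key : (∑ u ∈ S, ∑ w, min 2 (∑ v ∈ insert u (G.neighborFinset u), f (v, w)))
      ≤ ∑ v, f v := by
    calc ∑ u ∈ S, ∑ w, min 2 (∑ v ∈ insert u (G.neighborFinset u), f (v, w))
        ≤ ∑ u ∈ S, ∑ w, ∑ v ∈ insert u (G.neighborFinset u), f (v, w) :=
          Finset.sum_le_sum fun u _ => Finset.sum_le_sum fun w _ => min_le_right _ _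
      _ = ∑ w, ∑ u ∈ S, ∑ v ∈ insert u (G.neighborFinset u), f (v, w) := Finset.sum_comm
      _ = ∑ w, ∑ v ∈ S.biUnion (fun u => insert u (G.neighborFinset u)), f (v, w) := by
          refine Finset.sum_congr rfl fun w _ => ?_
          exact (Finset.sum_biUnion (fun u hu v hv huv => hdisj u hu v hv huv)).symm
      _ ≤ ∑ w, ∑ v, f (v, w) :=
          Finset.sum_le_sum fun w _ =>
            Finset.sum_le_sum_of_subset (Finset.subset_univ _)
      _ = ∑ v : V × W, f v := by
          rw [Finset.sum_comm]; exact (Fintype.sum_prod_type _).symm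
  have hcard : domNum G ≤ S.card := Nat.sInf_le ⟨S, hSdom, rfl⟩
  calc domNum G * romanDomNum H
      ≤ S.card * romanDomNum H := Nat.mul_le_mul_right _ hcard
    _ = ∑ _u ∈ S, romanDomNum H := by rw [Finset.sum_const, smul_eq_mul]
    _ ≤ ∑ u ∈ S, ∑ w, min 2 (∑ v ∈ insert u (G.neighborFinset u), f (v, w)) :=
          Finset.sum_le_sum fun u _ => hgsum u
    _ ≤ ∑ v, f v := key
    _ = romanDomNum (G.boxProd H) := hval.symm
end

section
/- If G has an efficient dominating set and H is a Roman graph, then γ_R(G □ H) ≥ 2γ(G)γ(H). -/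
open Finset

theorem stmt10 {V W : Type*} [Fintype V] [Fintype W]
    (G : SimpleGraph V) (H : SimpleGraph W) (hG : HasEfficientDomSet G)
    (hRoman : romanDomNum H = 2 * domNum H) :
    romanDomNum (G.boxProd H) ≥ 2 * domNum G * domNum H := by
  classical
  obtain ⟨S, hSdom, hSdisj⟩ := hG
  set N : V → Finset V := fun s => insert s (G.neighborFinset s) with hNdef
  have hNdisj : ∀ u ∈ S, ∀ v ∈ S, u ≠ v → Disjoint (N u) (N v) := by
    intro u hu v hv huv
    have h := hSdisj u hu v hv huv
    rw [Finset.disjoint_left]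
    intro a ha hb
    have ha' : a ∈ insert u (G.neighborSet u) := by
      simpa [hNdef, SimpleGraph.mem_neighborFinset, SimpleGraph.mem_neighborSet] using ha
    have hb' : a ∈ insert v (G.neighborSet v) := by
      simpa [hNdef, SimpleGraph.mem_neighborFinset, SimpleGraph.mem_neighborSet] using hb
    exact Set.disjoint_left.mp h ha' hb'
  -- the set defining romanDomNum of the box product is nonempty
  have hne : {n | ∃ f : V × W → ℕ, IsRDF (G.boxProd H) f ∧ ∑ v, f v = n}.Nonempty := by
    refine ⟨∑ v : V × W, (1 : ℕ), fun _ => 1, ⟨fun v => by norm_num, fun v h => by simp at h⟩, rfl⟩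
  obtain ⟨f, hf, hsum⟩ := Nat.sInf_mem hne
  set fs : V → W → ℕ := fun s w => min 2 (∑ g ∈ N s, f (g, w)) with hfsdef
  have hfsRDF : ∀ s ∈ S, IsRDF H (fs s) := by
    intro s hs
    constructor
    · intro w; exact min_le_left _ _
    · intro w hw
      have hw' : min 2 (∑ g ∈ N s, f (g, w)) = 0 := hw
      have hzero : ∑ g ∈ N s, f (g, w) = 0 := by
        rcases Nat.min_eq_zero_iff.mp hw' with h | h
        · exact absurd h (by norm_num)
        · exact h
      have hall : ∀ g ∈ N s, f (g, w) = 0 := by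
        intro g hg
        exact (Finset.sum_eq_zero_iff.mp hzero) g hg
      have hsw : f (s, w) = 0 := hall s (Finset.mem_insert_self _ _)
      obtain ⟨⟨a, b⟩, hadj, hu2⟩ := hf.2 (s, w) hsw
      rw [SimpleGraph.boxProd_adj] at hadj
      rcases hadj with ⟨hadjG, heq⟩ | ⟨hadjH, heq⟩
      · exfalso
        simp only at hadjG heq
        subst heq
        have hmem : a ∈ N s := by
          simp only [hNdef, Finset.mem_insert, SimpleGraph.mem_neighborFinset]
          exact Or.inr hadjG.symm
        have h0 := hall a hmem
        rw [h0] at hu2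
        exact absurd hu2 (by norm_num)
      · simp only at hadjH heq
        rw [heq] at hu2
        refine ⟨b, hadjH, ?_⟩
        have hmem : s ∈ N s := Finset.mem_insert_self _ _
        have hge : 2 ≤ ∑ g ∈ N s, f (g, b) := by
          calc 2 = f (s, b) := hu2.symm
          _ ≤ ∑ g ∈ N s, f (g, b) :=
            Finset.single_le_sum (f := fun g => f (g, b)) (fun i _ => Nat.zero_le _) hmem
        show min 2 (∑ g ∈ N s, f (g, b)) = 2
        exact min_eq_left hge
  have hdomG : domNum G ≤ S.card := Nat.sInf_le ⟨S, hSdom, rfl⟩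
  have hwt : ∀ s ∈ S, 2 * domNum H ≤ ∑ w, fs s w := by
    intro s hs
    rw [← hRoman]
    exact Nat.sInf_le ⟨fs s, hfsRDF s hs, rfl⟩
  have key : ∑ s ∈ S, ∑ w, fs s w ≤ romanDomNum (G.boxProd H) := by
    have h1 : ∑ s ∈ S, ∑ w, fs s w ≤ ∑ s ∈ S, ∑ w : W, ∑ g ∈ N s, f (g, w) := by
      refine Finset.sum_le_sum fun s _ => Finset.sum_le_sum fun w _ => min_le_right _ _
    have h2 : ∑ s ∈ S, ∑ w : W, ∑ g ∈ N s, f (g, w)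
        = ∑ w : W, ∑ g ∈ S.biUnion N, f (g, w) := by
      rw [Finset.sum_comm]
      refine Finset.sum_congr rfl fun w _ => ?_
      rw [Finset.sum_biUnion]
      intro u hu v hv huv
      exact hNdisj u hu v hv huv
    have h3 : ∑ w : W, ∑ g ∈ S.biUnion N, f (g, w) ≤ ∑ w : W, ∑ g : V, f (g, w) := by
      refine Finset.sum_le_sum fun w _ => ?_
      exact Finset.sum_le_sum_of_subset (Finset.subset_univ _)
    have h4 : ∑ w : W, ∑ g : V, f (g, w) = ∑ p : V × W, f p := by
      rw [Finset.sum_comm]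
      exact (Fintype.sum_prod_type f).symm
    calc ∑ s ∈ S, ∑ w, fs s w ≤ ∑ s ∈ S, ∑ w : W, ∑ g ∈ N s, f (g, w) := h1
      _ = ∑ w : W, ∑ g ∈ S.biUnion N, f (g, w) := h2
      _ ≤ ∑ w : W, ∑ g : V, f (g, w) := h3
      _ = ∑ p : V × W, f p := h4
      _ = romanDomNum (G.boxProd H) := hsum
  have hlow : S.card * (2 * domNum H) ≤ ∑ s ∈ S, ∑ w, fs s w := by
    calc S.card * (2 * domNum H) = ∑ _s ∈ S, 2 * domNum H := by
          rw [Finset.sum_const, smul_eq_mul]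
      _ ≤ ∑ s ∈ S, ∑ w, fs s w := Finset.sum_le_sum hwt
  calc 2 * domNum G * domNum H ≤ 2 * S.card * domNum H := by
        exact Nat.mul_le_mul_right _ (Nat.mul_le_mul_left _ hdomG)
    _ = S.card * (2 * domNum H) := by ring
    _ ≤ ∑ s ∈ S, ∑ w, fs s w := hlow
    _ ≤ romanDomNum (G.boxProd H) := key
end

section
/- A graph G is Roman (i.e., γ_R(G) = 2γ(G)) if and only if there exists a minimum-weight Roman dominating function f = (A_0, A_1, A_2) on G with A_1 = ∅. -/
open Finset

lemma domNum_mem {V : Type*} [Fintype V] (G : SimpleGraph V) :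
    ∃ S : Finset V, IsDominatingSet G ↑S ∧ S.card = domNum G := by
  have hne : {n | ∃ S : Finset V, IsDominatingSet G ↑S ∧ S.card = n}.Nonempty :=
    ⟨(univ : Finset V).card, univ, fun v hv => absurd (by simp) hv, rfl⟩
  exact Nat.sInf_mem hne

lemma sum_indicator_two {V : Type*} [Fintype V] [DecidableEq V] (S : Finset V) :
    ∑ v, (if v ∈ S then 2 else 0) = 2 * S.card := by
  simp [Finset.sum_ite_mem, mul_comm]

lemma rdn_le_two_dom {V : Type*} [Fintype V] [DecidableEq V] (G : SimpleGraph V)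
    {S : Finset V} (hS : IsDominatingSet G ↑S) :
    romanDomNum G ≤ 2 * S.card := by
  apply Nat.sInf_le
  refine ⟨fun v => if v ∈ S then 2 else 0, ⟨fun v => by dsimp only; split <;> omega, ?_⟩,
    sum_indicator_two S⟩
  intro v hv
  have hvS : v ∉ S := by intro h; simp [h] at hv
  obtain ⟨u, hu, hadj⟩ := hS v hvS
  exact ⟨u, hadj, by simp [Finset.mem_coe.mp hu]⟩

theorem stmt12 {V : Type*} [Fintype V] (G : SimpleGraph V) :
    romanDomNum G = 2 * domNum G ↔
      ∃ f : V → ℕ, IsRDF G f ∧ ∑ v, f v = romanDomNum G ∧ ∀ v, f v ≠ 1 := by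
  classical
  constructor
  · intro h
    obtain ⟨S, hS, hcard⟩ := domNum_mem G
    refine ⟨fun v => if v ∈ S then 2 else 0, ⟨fun v => by dsimp only; split <;> omega, ?_⟩, ?_, ?_⟩
    · intro v hv
      have hvS : v ∉ S := by intro hm; simp [hm] at hv
      obtain ⟨u, hu, hadj⟩ := hS v hvS
      exact ⟨u, hadj, by simp [Finset.mem_coe.mp hu]⟩
    · rw [sum_indicator_two, hcard, h]
    · intro v; dsimp only; split <;> omega
  · rintro ⟨f, ⟨hle, hdom⟩, hsum, hno1⟩
    set S : Finset V := univ.filter (fun v => f v = 2) with hSdef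
    have hSdom : IsDominatingSet G ↑S := by
      intro v hv
      have hv2 : f v ≠ 2 := by intro h; exact hv (by simp [hSdef, h])
      have hv0 : f v = 0 := by have := hle v; have := hno1 v; omega
      obtain ⟨u, hadj, hu⟩ := hdom v hv0
      exact ⟨u, by simp [hSdef, hu], hadj⟩
    have hsum2 : ∑ v, f v = 2 * S.card := by
      rw [← sum_indicator_two S]
      apply Finset.sum_congr rfl
      intro v _
      by_cases hv : v ∈ S
      · simp [hv, (Finset.mem_filter.mp hv).2]
      · have hv2 : f v ≠ 2 := fun h => hv (by simp [hSdef, h])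
        have : f v = 0 := by have := hle v; have := hno1 v; omega
        simp [hv, this]
    have h1 : romanDomNum G ≤ 2 * domNum G := by
      obtain ⟨T, hT, hTc⟩ := domNum_mem G
      rw [← hTc]; exact rdn_le_two_dom G hT
    have h2 : domNum G ≤ S.card := Nat.sInf_le ⟨S, hSdom, rfl⟩
    omega
end

section
/- Let G be a graph of order n with at least one connected component of order greater than two, and let H be any graph. Then γ_R(G □ H) ≤ (n+1)·γ_R(H) − 2γ(H). -/
open Finset

lemma aux_walk13 {V : Type*} {G : SimpleGraph V} :
    ∀ {c a : V} (_ : G.Walk c a) {x : V}, G.Adj a x → c ≠ a → c ≠ x →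
      ∃ v u w : V, u ≠ w ∧ G.Adj v u ∧ G.Adj v w := by
  intro c a W
  induction W with
  | nil => intro x _ h _; exact absurd rfl h
  | @cons c d a h W ih =>
    intro x hax hca hcx
    by_cases hda : d = a
    · subst hda
      exact ⟨d, c, x, hcx, h.symm, hax⟩
    · by_cases hdx : d = x
      · subst hdx
        exact ⟨d, c, a, hca, h.symm, hax.symm⟩
      · exact ih hax hda hdx

lemma exists_path3_13 {V : Type*} [Fintype V] {G : SimpleGraph V}
    (hG : ∃ c : G.ConnectedComponent, 2 < Nat.card c.supp) :
    ∃ v u w : V, u ≠ w ∧ G.Adj v u ∧ G.Adj v w := by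
  classical
  obtain ⟨c, hc⟩ := hG
  set s : Finset V := c.supp.toFinset with hs
  have hcard : 2 < s.card := by
    rwa [Nat.card_eq_card_toFinset] at hc
  have hne : s.Nonempty := Finset.card_pos.mp (by omega)
  obtain ⟨a, ha⟩ := hne
  obtain ⟨b, hb, hba⟩ := Finset.exists_mem_ne (show 1 < s.card by omega) a
  have ha' : a ∈ c.supp := by simpa [hs] using ha
  have hb' : b ∈ c.supp := by simpa [hs] using hb
  have hreab : G.Reachable a b :=
    SimpleGraph.ConnectedComponent.exact (ha'.trans hb'.symm)
  obtain ⟨Wab⟩ := hreab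
  obtain ⟨x, hax⟩ : ∃ x, G.Adj a x := by
    cases Wab with
    | nil => exact absurd rfl hba.symm
    | cons h _ => exact ⟨_, h⟩
  have : (s \ {a, x}).Nonempty := by
    rw [Finset.sdiff_nonempty]
    intro hsub
    have h1 := Finset.card_le_card hsub
    have h2 : ({a, x} : Finset V).card ≤ 2 := by
      have := Finset.card_insert_le a ({x} : Finset V)
      simpa using this
    omega
  obtain ⟨y, hy⟩ := this
  have hys : y ∈ s := (Finset.mem_sdiff.mp hy).1
  have hyax : y ≠ a ∧ y ≠ x := by
    have := (Finset.mem_sdiff.mp hy).2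
    simp at this
    exact this
  have hy' : y ∈ c.supp := by simpa [hs] using hys
  have hrya : G.Reachable y a := SimpleGraph.ConnectedComponent.exact (hy'.trans ha'.symm)
  obtain ⟨Wya⟩ := hrya
  exact aux_walk13 Wya hax hyax.1 hyax.2

private theorem stmt13_aux {V W : Type*} [Fintype V] [Fintype W]
    (G : SimpleGraph V) (H : SimpleGraph W)
    (hpath : ∃ v u w : V, u ≠ w ∧ G.Adj v u ∧ G.Adj v w) :
    (romanDomNum (G.boxProd H) : ℤ) ≤
      (Fintype.card V + 1) * romanDomNum H - 2 * domNum H := by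
  classical
  obtain ⟨v, u, w, huw, hvu, hvw⟩ := hpath
  have hvu' : v ≠ u := hvu.ne
  have hvw' : v ≠ w := hvw.ne
  -- a minimal RDF of H
  have hRne : {n | ∃ f : W → ℕ, IsRDF H f ∧ ∑ y, f y = n}.Nonempty :=
    ⟨∑ y : W, (1 : ℕ), fun _ => 1,
      ⟨fun _ => one_le_two, fun _ h => absurd h one_ne_zero⟩, rfl⟩
  obtain ⟨f, hf, hfsum⟩ : ∃ f : W → ℕ, IsRDF H f ∧ ∑ y, f y = romanDomNum H :=
    Nat.sInf_mem hRne
  set S1 : ℕ := ∑ y, f y with hS1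
  set k : ℕ := (univ.filter fun y => f y = 1).card with hk
  -- the support of f is a dominating set
  set D : Finset W := univ.filter fun y => f y ≠ 0 with hD
  have hDdom : IsDominatingSet H ↑D := by
    intro y hy
    have hy0 : f y = 0 := by
      by_contra h
      exact hy (by simp [hD, h])
    obtain ⟨z, hz, hz2⟩ := hf.2 y hy0
    exact ⟨z, by simp [hD, hz2], hz⟩
  have hγ : domNum H ≤ D.card := Nat.sInf_le ⟨D, hDdom, rfl⟩
  have h2D : 2 * D.card ≤ S1 + k := by
    have e1 : ∑ y ∈ D, (f y + (if f y = 1 then 1 else 0)) = 2 * D.card := by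
      rw [Finset.sum_congr rfl (fun y hy => ?_), Finset.sum_const, smul_eq_mul, mul_comm]
      have hy0 : f y ≠ 0 := by simpa [hD] using hy
      have hy2 : f y ≤ 2 := hf.1 y
      rcases (by omega : f y = 1 ∨ f y = 2) with h | h <;> simp [h]
    have e2 : ∑ y ∈ D, f y ≤ S1 :=
      Finset.sum_le_sum_of_subset (Finset.subset_univ D)
    have e3 : ∑ y ∈ D, (if f y = 1 then (1:ℕ) else 0) = k := by
      rw [Finset.sum_boole, Nat.cast_id, hk, hD]
      congr 1
      rw [Finset.filter_filter]
      apply Finset.filter_congr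
      intro y _
      constructor
      · rintro ⟨_, h⟩; exact h
      · intro h; exact ⟨by omega, h⟩
    rw [Finset.sum_add_distrib, e3] at e1
    omega
  -- the modified function on the product
  set g : V × W → ℕ := fun p =>
    if p.1 = v then (if f p.2 = 1 then 2 else f p.2)
    else if p.1 = u ∨ p.1 = w then (if f p.2 = 1 then 0 else f p.2)
    else f p.2 with hg
  have hgRDF : IsRDF (G.boxProd H) g := by
    constructor
    · rintro ⟨x, y⟩
      have := hf.1 y
      simp only [hg]
      split_ifs <;> omega
    · rintro ⟨x, y⟩ hp
      simp only [hg] at hp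
      by_cases hxv : x = v
      · subst hxv
        rw [if_pos rfl] at hp
        have hy0 : f y = 0 := by split at hp <;> omega
        obtain ⟨z, hz, hz2⟩ := hf.2 y hy0
        refine ⟨(x, z), SimpleGraph.boxProd_adj.mpr (Or.inr ⟨hz, rfl⟩), ?_⟩
        simp [hg, hz2]
      · rw [if_neg hxv] at hp
        by_cases hxuw : x = u ∨ x = w
        · rw [if_pos hxuw] at hp
          by_cases hy1 : f y = 1
          · refine ⟨(v, y), ?_, ?_⟩
            · refine SimpleGraph.boxProd_adj.mpr (Or.inl ⟨?_, rfl⟩)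
              rcases hxuw with h | h <;> subst h <;> assumption
            · simp [hg, hy1]
          · rw [if_neg hy1] at hp
            obtain ⟨z, hz, hz2⟩ := hf.2 y hp
            refine ⟨(x, z), SimpleGraph.boxProd_adj.mpr (Or.inr ⟨hz, rfl⟩), ?_⟩
            simp [hg, hz2, hxv, hxuw]
        · rw [if_neg hxuw] at hp
          obtain ⟨z, hz, hz2⟩ := hf.2 y hp
          refine ⟨(x, z), SimpleGraph.boxProd_adj.mpr (Or.inr ⟨hz, rfl⟩), ?_⟩
          simp [hg, hz2, hxv, hxuw]
  have hbox : romanDomNum (G.boxProd H) ≤ ∑ p, g p :=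
    Nat.sInf_le ⟨g, hgRDF, rfl⟩
  -- column sums
  have hboole : ∑ y, (if f y = 1 then (1:ℕ) else 0) = k := by
    rw [Finset.sum_boole, Nat.cast_id]
  have hcol : ∀ x : V, (∑ y, g (x, y)) +
      ((if x = u then k else 0) + (if x = w then k else 0)) =
      S1 + (if x = v then k else 0) := by
    intro x
    by_cases hxv : x = v
    · subst hxv
      simp only [hg, if_pos rfl, if_neg hvu', if_neg hvw', if_pos]
      rw [Finset.sum_congr rfl
        (fun y _ => show (if f y = 1 then 2 else f y) = f y + (if f y = 1 then 1 else 0) by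
          split_ifs with h <;> omega),
        Finset.sum_add_distrib, hboole]
      omega
    · by_cases hxuw : x = u ∨ x = w
      · have hcolu : (∑ y, (if f y = 1 then (0:ℕ) else f y)) + k = S1 := by
          rw [← hboole, ← Finset.sum_add_distrib]
          exact Finset.sum_congr rfl fun y _ => by split_ifs with h <;> omega
        rcases hxuw with h | h
        · have hxw : x ≠ w := by rw [h]; exact huw
          simp only [hg, if_neg hxv, if_pos (Or.inl h), if_pos h, if_neg hxw]
          omega
        · have hxu : x ≠ u := by rw [h]; exact huw.symm
          simp only [hg, if_neg hxv, if_pos (Or.inr h), if_pos h, if_neg hxu]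
          omega
      · push_neg at hxuw
        simp only [hg, if_neg hxv, if_neg (not_or.mpr hxuw), if_neg hxuw.1, if_neg hxuw.2]
        simp [hS1]
  have hT : (∑ p, g p) + (k + k) = Fintype.card V * S1 + k := by
    have h := Finset.sum_congr rfl (fun x (_ : x ∈ (univ : Finset V)) => hcol x)
    simp only [Finset.sum_add_distrib] at h
    rw [Finset.sum_ite_eq' univ u (fun _ => k), Finset.sum_ite_eq' univ w (fun _ => k),
      Finset.sum_ite_eq' univ v (fun _ => k), if_pos (Finset.mem_univ u),
      if_pos (Finset.mem_univ w), if_pos (Finset.mem_univ v), Finset.sum_const,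
      smul_eq_mul] at h
    rw [Fintype.sum_prod_type,
      show Fintype.card V * S1 = (univ : Finset V).card * S1 by rw [Finset.card_univ]]
    omega
  -- conclude
  have H1 : (romanDomNum (G.boxProd H) : ℤ) ≤ (∑ p, g p : ℕ) := by exact_mod_cast hbox
  have H2 : ((∑ p, g p : ℕ) : ℤ) + (k + k) = (Fintype.card V : ℤ) * S1 + k := by
    exact_mod_cast hT
  have H3 : 2 * (D.card : ℤ) ≤ (S1 : ℤ) + k := by exact_mod_cast h2D
  have H4 : (domNum H : ℤ) ≤ (D.card : ℤ) := by exact_mod_cast hγ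
  have H5 : (S1 : ℤ) = romanDomNum H := by exact_mod_cast hfsum
  rw [← H5]
  linarith

theorem stmt13 {V W : Type*} [Fintype V] [Fintype W]
    (G : SimpleGraph V) (H : SimpleGraph W)
    (hG : ∃ c : G.ConnectedComponent, 2 < Nat.card c.supp) :
    (romanDomNum (G.boxProd H) : ℤ) ≤
      (Fintype.card V + 1) * romanDomNum H - 2 * domNum H :=
  stmt13_aux G H (exists_path3_13 hG)
end

section
/- If G is a graph of order n with at least one connected component of order greater than two and H is a graph that is not Roman (γ_R(H) < 2γ(H)), then γ_R(G □ H) ≤ n·γ_R(H) − 1. -/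
open Finset

lemma walk_aux15 {V : Type*} {G : SimpleGraph V} {x y : V} (w : G.Walk x y)
    (hw : w.IsPath) (hxy : x ≠ y) :
    G.Adj x y ∨ ∃ a b c, G.Adj b a ∧ G.Adj b c ∧ a ≠ c := by
  cases w with
  | nil => exact absurd rfl hxy
  | cons h q =>
    cases q with
    | nil => exact Or.inl h
    | @cons m t _ h2 r =>
      refine Or.inr ⟨x, _, _, h.symm, h2, ?_⟩
      intro heq
      have hnd := hw.support_nodup
      simp only [SimpleGraph.Walk.support_cons, List.nodup_cons] at hnd
      exact hnd.1 (by subst heq; simp [SimpleGraph.Walk.start_mem_support])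

lemma exists_mid15 {V : Type*} {G : SimpleGraph V} {u v w : V}
    (huv : u ≠ v) (huw : u ≠ w) (hvw : v ≠ w)
    (r1 : G.Reachable u v) (r2 : G.Reachable u w) :
    ∃ a b c, G.Adj b a ∧ G.Adj b c ∧ a ≠ c := by
  classical
  obtain ⟨p1⟩ := r1
  rcases walk_aux15 p1.toPath.1 p1.toPath.2 huv with h1 | h1
  · obtain ⟨p2⟩ := r2
    rcases walk_aux15 p2.toPath.1 p2.toPath.2 huw with h2 | h2
    · exact ⟨v, u, w, h1, h2, hvw⟩
    · exact h2
  · exact h1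

theorem stmt15 {V W : Type*} [Fintype V] [Fintype W]
    (G : SimpleGraph V) (H : SimpleGraph W)
    (hG : ∃ c : G.ConnectedComponent, 2 < Nat.card c.supp)
    (hH : romanDomNum H < 2 * domNum H) :
    (romanDomNum (G.boxProd H) : ℤ) ≤ Fintype.card V * romanDomNum H - 1 := by
  classical
  -- get a path of length 2 in G
  obtain ⟨k, hk⟩ := hG
  have hk' : 2 < k.supp.toFinset.card := by
    rwa [Set.toFinset_card, ← Nat.card_eq_fintype_card]
  obtain ⟨u, hu, v, hv, w, hw, huv, huw, hvw⟩ := Finset.two_lt_card.mp hk'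
  rw [Set.mem_toFinset, SimpleGraph.ConnectedComponent.mem_supp_iff] at hu hv hw
  obtain ⟨a, b, c, hba, hbc, hac⟩ :=
    exists_mid15 huv huw hvw (SimpleGraph.ConnectedComponent.exact (hu.trans hv.symm))
      (SimpleGraph.ConnectedComponent.exact (hu.trans hw.symm))
  -- get a minimum RDF f of H
  have hne : {n | ∃ f : W → ℕ, IsRDF H f ∧ ∑ x, f x = n}.Nonempty :=
    ⟨∑ x : W, 1, fun _ => 1, ⟨fun _ => one_le_two, fun _ h => absurd h one_ne_zero⟩, rfl⟩
  obtain ⟨f, hf, hsum⟩ := Nat.sInf_mem hne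
  replace hsum : ∑ x : W, f x = romanDomNum H := hsum
  clear hne
  -- f has a vertex of value 1
  obtain ⟨w₀, hw₀⟩ : ∃ z, f z = 1 := by
    by_contra hcon
    push_neg at hcon
    obtain ⟨S, hS⟩ : ∃ S : Finset W, S = univ.filter (fun z => f z = 2) := ⟨_, rfl⟩
    have hdom : IsDominatingSet H ↑S := by
      intro z hz
      rw [hS] at hz
      simp only [coe_filter, Set.mem_setOf_eq, mem_univ, true_and] at hz
      have hz0 : f z = 0 := by
        have h1 := hf.1 z; have h2 := hcon z; clear hsum; omega
      obtain ⟨t, ht, ht2⟩ := hf.2 z hz0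
      exact ⟨t, by simp [hS, ht2], ht⟩
    have h1 : domNum H ≤ S.card := Nat.sInf_le ⟨S, hdom, rfl⟩
    have h2 : ∑ z, f z = 2 * S.card := by
      rw [← Finset.sum_filter_add_sum_filter_not univ (fun z => f z = 2) f, ← hS]
      have e1 : ∑ z ∈ S, f z = 2 * S.card := by
        rw [hS, Finset.sum_congr rfl (fun z hz => (mem_filter.mp hz).2), Finset.sum_const,
          smul_eq_mul, mul_comm, ← hS]
      have e2 : ∑ z ∈ univ.filter (fun z => ¬ f z = 2), f z = 0 := by
        apply Finset.sum_eq_zero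
        intro z hz
        have h1 := (mem_filter.mp hz).2
        have h2 := hf.1 z; have h3 := hcon z; clear hsum; omega
      rw [e1, e2, add_zero]
    rw [hsum] at h2
    clear hsum
    omega
  -- build an RDF on the box product
  obtain ⟨g, hg⟩ : ∃ g : V × W → ℕ, g = fun x =>
      (if x = (a, w₀) then 0 else if x = (c, w₀) then 0 else
        if x = (b, w₀) then 2 else f x.2) := ⟨_, rfl⟩
  have hab : a ≠ b := hba.ne'
  have hcb : c ≠ b := hbc.ne'
  have hgval : ∀ x : V × W, x ≠ (a, w₀) → x ≠ (c, w₀) → x ≠ (b, w₀) → g x = f x.2 := by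
    intro x h1 h2 h3; simp [hg, h1, h2, h3]
  have hgrdf : IsRDF (G.boxProd H) g := by
    constructor
    · intro x
      rw [hg]
      simp only []
      split_ifs with h1 h2 h3
      · exact Nat.zero_le 2
      · exact Nat.zero_le 2
      · exact le_refl 2
      · exact hf.1 _
    · intro x hx
      by_cases h1 : x = (a, w₀)
      · refine ⟨(b, w₀), ?_, ?_⟩
        · rw [h1]; exact SimpleGraph.boxProd_adj.mpr (Or.inl ⟨hba, rfl⟩)
        · simp [hg, Prod.ext_iff, hba.ne, hbc.ne]
      by_cases h2 : x = (c, w₀)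
      · refine ⟨(b, w₀), ?_, ?_⟩
        · rw [h2]; exact SimpleGraph.boxProd_adj.mpr (Or.inl ⟨hbc, rfl⟩)
        · simp [hg, Prod.ext_iff, hba.ne, hbc.ne]
      by_cases h3 : x = (b, w₀)
      · exfalso; rw [h3] at hx; simp [hg, Prod.ext_iff, hba.ne, hbc.ne] at hx
      · rw [hgval x h1 h2 h3] at hx
        obtain ⟨t, ht, ht2⟩ := hf.2 x.2 hx
        have htw : t ≠ w₀ := by intro he; rw [he, hw₀] at ht2; exact absurd ht2 (by decide)
        refine ⟨(x.1, t), ?_, ?_⟩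
        · exact SimpleGraph.boxProd_adj.mpr (Or.inr ⟨ht, rfl⟩)
        · rw [hgval (x.1, t) (by simp [Prod.ext_iff, htw]) (by simp [Prod.ext_iff, htw])
            (by simp [Prod.ext_iff, htw])]
          exact ht2
  -- compute the weight of g
  obtain ⟨s, hs⟩ : ∃ s : Finset (V × W), s = {(a, w₀), (b, w₀), (c, w₀)} := ⟨_, rfl⟩
  have hmem1 : ((a, w₀) : V × W) ∉ ({(b, w₀), (c, w₀)} : Finset (V × W)) := by
    simp [Prod.ext_iff, hab, hac]
  have hmem2 : ((b, w₀) : V × W) ∉ ({(c, w₀)} : Finset (V × W)) := by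
    simp [Prod.ext_iff, hcb.symm]
  have hsg : ∑ x ∈ s, g x = 2 := by
    rw [hs, show ({(a, w₀), (b, w₀), (c, w₀)} : Finset (V × W)) =
      insert (a, w₀) (insert (b, w₀) {(c, w₀)}) from rfl,
      Finset.sum_insert hmem1, Finset.sum_insert hmem2, Finset.sum_singleton]
    simp [hg, Prod.ext_iff, hab, hac, hba.ne, hbc.ne]
  have hsf : ∑ x ∈ s, f x.2 = 3 := by
    rw [hs, show ({(a, w₀), (b, w₀), (c, w₀)} : Finset (V × W)) =
      insert (a, w₀) (insert (b, w₀) {(c, w₀)}) from rfl,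
      Finset.sum_insert hmem1, Finset.sum_insert hmem2, Finset.sum_singleton]
    simp [hw₀]
  have hout : ∑ x ∈ univ \ s, g x = ∑ x ∈ univ \ s, f x.2 := by
    apply Finset.sum_congr rfl
    intro x hx
    rw [mem_sdiff, hs] at hx
    simp only [mem_insert, mem_singleton] at hx
    push_neg at hx
    exact hgval x hx.2.1 hx.2.2.2 hx.2.2.1
  have e1 : ∑ x ∈ univ \ s, g x + ∑ x ∈ s, g x = ∑ x, g x :=
    Finset.sum_sdiff (subset_univ s)
  have e2 : ∑ x ∈ univ \ s, f x.2 + ∑ x ∈ s, f x.2 = ∑ x : V × W, f x.2 :=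
    Finset.sum_sdiff (subset_univ s)
  have etot : ∑ x : V × W, f x.2 = Fintype.card V * romanDomNum H := by
    rw [Fintype.sum_prod_type]
    simp only [hsum, Finset.sum_const, smul_eq_mul, Finset.card_univ]
  have hle : romanDomNum (G.boxProd H) ≤ ∑ x, g x := Nat.sInf_le ⟨g, hgrdf, rfl⟩
  have key : ∑ x, g x + 1 = Fintype.card V * romanDomNum H := by
    rw [← e1, hsg, hout, ← etot, ← e2, hsf, add_assoc]
  obtain ⟨N, hN⟩ : ∃ N, N = ∑ x, g x := ⟨_, rfl⟩
  rw [← hN] at hle key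
  have h1 : (romanDomNum (G.boxProd H) : ℤ) ≤ (N : ℤ) := Nat.cast_le.mpr hle
  have h2 : ((N : ℤ) + 1) = (Fintype.card V : ℤ) * (romanDomNum H : ℤ) := by
    exact_mod_cast congrArg (Nat.cast (R := ℤ)) key
  linarith
end

section
/- Let f₁ = (A_0, A_1, A_2) be a minimum-weight Roman dominating function on G and f₂ = (B_0, B_1, B_2) a minimum-weight Roman dominating function on H. Then γ_R(G ⊠ H) ≤ γ_R(G)·γ_R(H) − 2|A_2||B_2|. -/
open Finset

theorem stmt17 {V W : Type*} [Fintype V] [Fintype W] [DecidableEq V] [DecidableEq W]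
    (G : SimpleGraph V) (H : SimpleGraph W)
    (f₁ : V → ℕ) (hf₁ : IsRDF G f₁) (hmin₁ : ∑ v, f₁ v = romanDomNum G)
    (f₂ : W → ℕ) (hf₂ : IsRDF H f₂) (hmin₂ : ∑ w, f₂ w = romanDomNum H) :
    (romanDomNum (strongProd G H) : ℤ) ≤
      (romanDomNum G : ℤ) * romanDomNum H -
        2 * (Finset.univ.filter (fun v => f₁ v = 2)).card *
          (Finset.univ.filter (fun w => f₂ w = 2)).card := by
  classical
  obtain ⟨hle₁, hdom₁⟩ := hf₁
  obtain ⟨hle₂, hdom₂⟩ := hf₂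
  set F : V × W → ℕ := fun p => min (f₁ p.1 * f₂ p.2) 2 with hF
  have hRDF : IsRDF (strongProd G H) F := by
    refine ⟨fun p => min_le_right _ _, ?_⟩
    rintro ⟨v, w⟩ h0
    have h0' : f₁ v = 0 ∨ f₂ w = 0 := by
      simp only [hF, Nat.min_eq_zero_iff, Nat.mul_eq_zero] at h0
      omega
    rcases h0' with hv | hw
    · obtain ⟨u, hu, hu2⟩ := hdom₁ v hv
      by_cases hw : f₂ w = 0
      · obtain ⟨x, hx, hx2⟩ := hdom₂ w hw
        refine ⟨(u, x), ⟨?_, Or.inr hu, Or.inr hx⟩, by simp [hF, hu2, hx2]⟩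
        intro h; exact G.ne_of_adj hu (congrArg Prod.fst h)
      · refine ⟨(u, w), ⟨?_, Or.inr hu, Or.inl rfl⟩, ?_⟩
        · intro h; exact G.ne_of_adj hu (congrArg Prod.fst h)
        · have := hle₂ w
          simp only [hF, hu2]
          omega
    · obtain ⟨x, hx, hx2⟩ := hdom₂ w hw
      by_cases hv : f₁ v = 0
      · obtain ⟨u, hu, hu2⟩ := hdom₁ v hv
        refine ⟨(u, x), ⟨?_, Or.inr hu, Or.inr hx⟩, by simp [hF, hu2, hx2]⟩
        intro h; exact G.ne_of_adj hu (congrArg Prod.fst h)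
      · refine ⟨(v, x), ⟨?_, Or.inl rfl, Or.inr hx⟩, ?_⟩
        · intro h; exact H.ne_of_adj hx (congrArg Prod.snd h)
        · have := hle₁ v
          simp only [hF, hx2]
          omega
  have hmem : romanDomNum (strongProd G H) ≤ ∑ p, F p :=
    Nat.sInf_le ⟨F, hRDF, rfl⟩
  have point : ∀ v w, (F (v, w) : ℤ) = (f₁ v : ℤ) * (f₂ w : ℤ)
      - (if f₁ v = 2 then (1:ℤ) else 0) * (if f₂ w = 2 then (2:ℤ) else 0) := by
    intro v w
    have h1 := hle₁ v; have h2 := hle₂ w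
    have hv : f₁ v = 0 ∨ f₁ v = 1 ∨ f₁ v = 2 := by omega
    have hw : f₂ w = 0 ∨ f₂ w = 1 ∨ f₂ w = 2 := by omega
    rcases hv with h|h|h <;> rcases hw with h'|h'|h' <;> simp [hF, h, h']
  have key : (∑ p : V × W, (F p : ℤ)) =
      ((∑ v, f₁ v : ℕ) : ℤ) * ((∑ w, f₂ w : ℕ) : ℤ)
      - 2 * (Finset.univ.filter (fun v => f₁ v = 2)).card *
          (Finset.univ.filter (fun w => f₂ w = 2)).card := by
    rw [Fintype.sum_prod_type]
    have : ∀ v, ∑ w, (F (v, w) : ℤ) =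
        (f₁ v : ℤ) * ((∑ w, f₂ w : ℕ) : ℤ)
        - (if f₁ v = 2 then (1:ℤ) else 0) *
            (2 * (Finset.univ.filter (fun w => f₂ w = 2)).card) := by
      intro v
      simp only [point, Finset.sum_sub_distrib, ← Finset.mul_sum]
      congr 1
      · push_cast; ring
      · congr 1
        rw [Finset.sum_ite, Finset.sum_const, Finset.sum_const]
        simp [mul_comm]
    simp only [this, Finset.sum_sub_distrib, ← Finset.sum_mul]
    congr 1
    · push_cast; ring
    · rw [Finset.sum_ite, Finset.sum_const, Finset.sum_const]
      simp
      ring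
  have hcast : (romanDomNum (strongProd G H) : ℤ) ≤ ((∑ p, F p : ℕ) : ℤ) := by
    exact_mod_cast hmem
  calc (romanDomNum (strongProd G H) : ℤ) ≤ ((∑ p, F p : ℕ) : ℤ) := hcast
    _ = (∑ p : V × W, (F p : ℤ)) := by push_cast; rfl
    _ = _ := by rw [key, hmin₁, hmin₂]
end

section
/- If G has an efficient dominating set, then for any graph H, γ_R(G ⊠ H) ≥ γ(G)·γ_R(H), where G ⊠ H is the strong product. -/
open Finset

theorem stmt18 {V W : Type*} [Fintype V] [Fintype W]
    (G : SimpleGraph V) (H : SimpleGraph W) (hG : HasEfficientDomSet G) :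
    romanDomNum (strongProd G H) ≥ domNum G * romanDomNum H := by
  classical
  obtain ⟨D, hDdom, hDdisj⟩ := hG
  have hγG : domNum G ≤ D.card := Nat.sInf_le ⟨D, hDdom, rfl⟩
  have hne : sInf {n | ∃ f : V × W → ℕ, IsRDF (strongProd G H) f ∧ ∑ v, f v = n}
      ∈ {n | ∃ f : V × W → ℕ, IsRDF (strongProd G H) f ∧ ∑ v, f v = n} :=
    Nat.sInf_mem ⟨_, fun _ => 2, ⟨fun _ => le_refl 2, fun v h => absurd h (by norm_num)⟩, rfl⟩
  obtain ⟨f, hf, hfsum⟩ := hne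
  set N : V → Finset V := fun d => insert d (G.neighborFinset d) with hNdef
  have hNdisj : (↑D : Set V).PairwiseDisjoint N := by
    intro u hu v hv huv
    have hd := hDdisj u hu v hv huv
    rw [Set.disjoint_left] at hd
    simp only [Function.onFun]
    rw [Finset.disjoint_left]
    intro a ha hb
    have ha' : a ∈ insert u (G.neighborFinset u) := ha
    have hb' : a ∈ insert v (G.neighborFinset v) := hb
    simp only [Finset.mem_insert, SimpleGraph.mem_neighborFinset] at ha' hb'
    exact hd (by simpa using ha') (by simpa using hb')
  set h : V → W → ℕ := fun d w => min 2 (∑ v ∈ N d, f (v, w)) with hhdef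
  have hdN : ∀ d, d ∈ N d := fun d => Finset.mem_insert_self _ _
  have hRDF : ∀ d, IsRDF H (h d) := by
    intro d
    constructor
    · intro w; exact min_le_left _ _
    · intro w hw
      have hw' : min 2 (∑ v ∈ N d, f (v, w)) = 0 := hw
      have hsum0 : ∑ v ∈ N d, f (v, w) = 0 := by
        rcases Nat.min_eq_zero_iff.mp hw' with h0 | h0
        · exact absurd h0 (by norm_num)
        · exact h0
      have hall : ∀ v ∈ N d, f (v, w) = 0 := fun v hv =>
        (Finset.sum_eq_zero_iff.mp hsum0) v hv
      obtain ⟨⟨u, x⟩, hadj, hfu⟩ := hf.2 (d, w) (hall d (hdN d))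
      obtain ⟨hne', h1, h2⟩ := hadj
      have huN : u ∈ N d := by
        rcases h1 with h1 | h1
        · rw [show u = d from h1]; exact hdN d
        · exact Finset.mem_insert_of_mem
            ((SimpleGraph.mem_neighborFinset _ _ _).mpr h1.symm)
      rcases h2 with h2 | h2
      · have h0 := hall u huN
        rw [show x = w from h2] at hfu
        rw [h0] at hfu
        exact absurd hfu (by norm_num)
      · refine ⟨x, h2, ?_⟩
        have hle : f (u, x) ≤ ∑ v ∈ N d, f (v, x) :=
          Finset.single_le_sum (f := fun v => f (v, x)) (fun _ _ => Nat.zero_le _) huN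
        rw [hfu] at hle
        show min 2 (∑ v ∈ N d, f (v, x)) = 2
        exact min_eq_left hle
  have h1 : ∀ d, romanDomNum H ≤ ∑ w, h d w := fun d => Nat.sInf_le ⟨h d, hRDF d, rfl⟩
  have h2 : ∀ d, ∑ w, h d w ≤ ∑ v ∈ N d, ∑ w, f (v, w) := by
    intro d
    rw [Finset.sum_comm]
    exact Finset.sum_le_sum fun w _ => min_le_right _ _
  calc domNum G * romanDomNum H ≤ D.card * romanDomNum H :=
        Nat.mul_le_mul_right _ hγG
    _ = ∑ _d ∈ D, romanDomNum H := by rw [Finset.sum_const, smul_eq_mul]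
    _ ≤ ∑ d ∈ D, ∑ v ∈ N d, ∑ w, f (v, w) :=
        Finset.sum_le_sum fun d _ => le_trans (h1 d) (h2 d)
    _ = ∑ v ∈ D.biUnion N, ∑ w, f (v, w) := (Finset.sum_biUnion hNdisj).symm
    _ ≤ ∑ v, ∑ w, f (v, w) :=
        Finset.sum_le_sum_of_subset (Finset.subset_univ _)
    _ = ∑ p : V × W, f p := (Fintype.sum_prod_type _).symm
    _ = romanDomNum (strongProd G H) := hfsum
end
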